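/- The set of pairs (a, (a_n)) where (a_n) is a nilpotent divided power sequence on a in a commutative ring A of characteristic p forms an abelian group under the operation (a_•) + (b_•) := (c_n) with c_n = Σ_{i+j=n} a_i * b_j; that is, the convolution of two nilpotent divided power sequences is a nilpotent divided power sequence, convolution is commutative and associative, the sequence (1,0,0,...) is an identity, and every element has an inverse. -/

import Mathlib

open Finset

section Aux

variable {A : Type*} [CommRing A]

theorem key_closure_aux (a b : ℕ → A)
    (ha : ∀ n m : ℕ, ((n + m).choose n : A) * a (n + m) = a n * a m)
    (hb : ∀ n m : ℕ, ((n + m).choose n : A) * b (n + m) = b n * b m) (n m : ℕ) :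
    ((n + m).choose n : A) * (∑ ij ∈ antidiagonal (n + m), a ij.1 * b ij.2)
      = (∑ ij ∈ antidiagonal n, a ij.1 * b ij.2) * (∑ ij ∈ antidiagonal m, a ij.1 * b ij.2) := by
  rw [Finset.mul_sum]
  have lhs : ∀ s ∈ antidiagonal (n + m),
      ((n + m).choose n : A) * (a s.1 * b s.2)
        = ∑ x ∈ antidiagonal n, ((s.1.choose x.1 * s.2.choose x.2 : ℕ) : A) * (a s.1 * b s.2) := by
    intro s hs
    rw [← Finset.sum_mul, ← Nat.cast_sum]
    congr 2
    rw [← Nat.add_choose_eq, (Finset.HasAntidiagonal.mem_antidiagonal.mp hs)]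
  rw [Finset.sum_congr rfl lhs, Finset.sum_comm, Finset.sum_mul_sum]
  refine Finset.sum_congr rfl fun x hx => ?_
  have hxn := Finset.HasAntidiagonal.mem_antidiagonal.mp hx
  have himg : ((antidiagonal m).image fun y => (x.1 + y.1, x.2 + y.2)) ⊆ antidiagonal (n + m) := by
    intro s hs
    simp only [Finset.mem_image] at hs
    obtain ⟨y, hy, rfl⟩ := hs
    have := Finset.HasAntidiagonal.mem_antidiagonal.mp hy
    rw [Finset.HasAntidiagonal.mem_antidiagonal]
    omega
  rw [← Finset.sum_subset himg ?_]
  · rw [Finset.sum_image ?_]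
    · refine Finset.sum_congr rfl fun y hy => ?_
      push_cast
      linear_combination (((x.2 + y.2).choose x.2 : A) * b (x.2 + y.2)) * ha x.1 y.1
        + (a x.1 * a y.1) * hb x.2 y.2
    · intro y₁ h₁ y₂ h₂ h
      have := Finset.HasAntidiagonal.mem_antidiagonal.mp h₁
      have := Finset.HasAntidiagonal.mem_antidiagonal.mp h₂
      simp only [Prod.mk.injEq] at h
      obtain ⟨h1, h2⟩ := h
      ext <;> omega
  · intro s hs hsn
    obtain ⟨s1, s2⟩ := s
    have hsum := Finset.HasAntidiagonal.mem_antidiagonal.mp hs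
    simp only at hsum ⊢
    by_cases h1 : x.1 ≤ s1
    · by_cases h2 : x.2 ≤ s2
      · exfalso; apply hsn
        rw [Finset.mem_image]
        refine ⟨(s1 - x.1, s2 - x.2), Finset.HasAntidiagonal.mem_antidiagonal.mpr (by simp; omega), ?_⟩
        simp only [Prod.mk.injEq]
        omega
      · have h0 : s1.choose x.1 * s2.choose x.2 = 0 := by
          rw [Nat.choose_eq_zero_of_lt (show s2 < x.2 by omega)]; ring
        rw [h0]; push_cast; ring
    · have h0 : s1.choose x.1 * s2.choose x.2 = 0 := by
        rw [Nat.choose_eq_zero_of_lt (show s1 < x.1 by omega)]; ring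
      rw [h0]; push_cast; ring

theorem conv_coeff_aux (a b : ℕ → A) (n : ℕ) :
    ∑ i ∈ Finset.range (n + 1), a i * b (n - i)
      = PowerSeries.coeff n (PowerSeries.mk a * PowerSeries.mk b) := by
  rw [PowerSeries.coeff_mul, Finset.Nat.sum_antidiagonal_eq_sum_range_succ_mk]
  simp [PowerSeries.coeff_mk]

theorem conv_assoc_aux (a b c : ℕ → A) (n : ℕ) :
    ∑ i ∈ Finset.range (n + 1), (∑ j ∈ Finset.range (i + 1), a j * b (i - j)) * c (n - i)
      = ∑ i ∈ Finset.range (n + 1), a i * ∑ j ∈ Finset.range ((n - i) + 1), b j * c ((n - i) - j) := by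
  calc ∑ i ∈ Finset.range (n + 1), (∑ j ∈ Finset.range (i + 1), a j * b (i - j)) * c (n - i)
      = ∑ i ∈ Finset.range (n + 1),
          PowerSeries.coeff i (PowerSeries.mk a * PowerSeries.mk b) * c (n - i) := by
        refine Finset.sum_congr rfl fun i _ => ?_
        rw [conv_coeff_aux a b i]
    _ = PowerSeries.coeff n ((PowerSeries.mk a * PowerSeries.mk b) * PowerSeries.mk c) := by
        rw [PowerSeries.coeff_mul, Finset.Nat.sum_antidiagonal_eq_sum_range_succ_mk]
        simp [PowerSeries.coeff_mk]
    _ = PowerSeries.coeff n (PowerSeries.mk a * (PowerSeries.mk b * PowerSeries.mk c)) := by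
        rw [mul_assoc]
    _ = ∑ i ∈ Finset.range (n + 1),
          a i * PowerSeries.coeff (n - i) (PowerSeries.mk b * PowerSeries.mk c) := by
        rw [PowerSeries.coeff_mul, Finset.Nat.sum_antidiagonal_eq_sum_range_succ_mk]
        simp [PowerSeries.coeff_mk]
    _ = ∑ i ∈ Finset.range (n + 1),
          a i * ∑ j ∈ Finset.range ((n - i) + 1), b j * c ((n - i) - j) := by
        refine Finset.sum_congr rfl fun i _ => ?_
        rw [conv_coeff_aux b c (n - i)]

theorem alternating_aux (n : ℕ) (hn : n ≠ 0) :
    ∑ i ∈ Finset.range (n + 1), (-1 : A) ^ i * (n.choose i : A) = 0 := by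
  have := add_pow (-1 : A) 1 n
  simp only [neg_add_cancel, one_pow, mul_one, zero_pow hn] at this
  rw [← this]

end Aux

/-- Nilpotent divided power sequences in a commutative ring of characteristic `p`
form an abelian group under convolution `(a + b)_n = ∑_{i+j=n} a_i b_j`. -/
theorem nilpotent_pd_sequences_abelian_group {p : ℕ} (hp : p.Prime)
    (A : Type*) [CommRing A] [CharP A p]
    (NPD : (ℕ → A) → Prop)
    (hNPD : NPD = fun a =>
      a 0 = 1 ∧ (∀ n m : ℕ, (Nat.choose (n + m) n : A) * a (n + m) = a n * a m) ∧
        ∃ N : ℕ, ∀ n ≥ N, a n = 0)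
    (conv : (ℕ → A) → (ℕ → A) → (ℕ → A))
    (hconv : conv = fun a b n => ∑ i ∈ Finset.range (n + 1), a i * b (n - i))
    (e : ℕ → A) (he : e = fun n => if n = 0 then 1 else 0) :
    (∀ a b, NPD a → NPD b → NPD (conv a b)) ∧
      (∀ a b, conv a b = conv b a) ∧
      (∀ a b c, conv (conv a b) c = conv a (conv b c)) ∧
      NPD e ∧
      (∀ a, NPD a → conv a e = a) ∧
      (∀ a, NPD a → ∃ b, NPD b ∧ conv a b = e) := by
  subst hNPD hconv he
  have hconv' : ∀ a b : ℕ → A, (fun n => ∑ i ∈ Finset.range (n + 1), a i * b (n - i))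
      = fun n => PowerSeries.coeff n (PowerSeries.mk a * PowerSeries.mk b) := by
    intro a b
    funext n
    exact conv_coeff_aux a b n
  refine ⟨?_, ?_, ?_, ?_, ?_, ?_⟩
  · -- closure
    rintro a b ⟨ha0, haB, Na, haN⟩ ⟨hb0, hbB, Nb, hbN⟩
    refine ⟨?_, ?_, Na + Nb, ?_⟩
    · simp [ha0, hb0]
    · intro n m
      have h := key_closure_aux a b haB hbB n m
      simpa only [Finset.Nat.sum_antidiagonal_eq_sum_range_succ_mk] using h
    · intro n hn
      simp only
      apply Finset.sum_eq_zero
      intro i hi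
      simp only [Finset.mem_range] at hi
      by_cases h : Na ≤ i
      · rw [haN i h, zero_mul]
      · rw [hbN (n - i) (by omega), mul_zero]
  · -- commutativity
    intro a b
    show (fun n => ∑ i ∈ Finset.range (n + 1), a i * b (n - i))
      = fun n => ∑ i ∈ Finset.range (n + 1), b i * a (n - i)
    rw [hconv' a b, hconv' b a, mul_comm]
  · -- associativity
    intro a b c
    funext n
    exact conv_assoc_aux a b c n
  · -- identity is NPD
    refine ⟨by simp, ?_, 1, ?_⟩
    · intro n m
      rcases Nat.eq_zero_or_pos n with rfl | hn
      · simp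
      · rcases Nat.eq_zero_or_pos m with rfl | hm
        · simp
        · simp only [if_neg (by omega : ¬ n + m = 0), if_neg (by omega : ¬ n = 0),
            if_neg (by omega : ¬ m = 0)]
          ring
    · intro n hn
      simp only
      rw [if_neg (by omega : ¬ n = 0)]
  · -- right identity
    rintro a ⟨ha0, haB, Na, haN⟩
    funext n
    simp only
    rw [Finset.sum_eq_single n]
    · simp
    · intro i hi hne
      simp only [Finset.mem_range] at hi
      rw [if_neg (by omega), mul_zero]
    · intro h
      simp at h
  · -- inverses
    rintro a ⟨ha0, haB, Na, haN⟩
    refine ⟨fun n => (-1 : A) ^ n * a n, ⟨by simp [ha0], ?_, Na, ?_⟩, ?_⟩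
    · intro n m
      have h := haB n m
      have : ((-1 : A)) ^ (n + m) = (-1 : A) ^ n * (-1 : A) ^ m := by rw [pow_add]
      calc ((n + m).choose n : A) * ((-1 : A) ^ (n + m) * a (n + m))
          = (-1 : A) ^ (n + m) * (((n + m).choose n : A) * a (n + m)) := by ring
        _ = (-1 : A) ^ n * a n * ((-1 : A) ^ m * a m) := by rw [h, this]; ring
    · intro n hn
      show (-1 : A) ^ n * a n = 0
      rw [haN n hn, mul_zero]
    · funext n
      simp only
      rcases Nat.eq_zero_or_pos n with rfl | hn
      · simp [ha0]
      · rw [if_neg (by omega : ¬ n = 0)]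
        have key : ∀ i ∈ Finset.range (n + 1),
            a i * ((-1 : A) ^ (n - i) * a (n - i))
              = (-1 : A) ^ (n - i) * ((n.choose i : A) * a n) := by
          intro i hi
          simp only [Finset.mem_range] at hi
          have h := haB i (n - i)
          rw [show i + (n - i) = n by omega] at h
          linear_combination (-(-1 : A) ^ (n - i)) * h
        rw [Finset.sum_congr rfl key]
        have hsign : ∀ i ∈ Finset.range (n + 1),
            (-1 : A) ^ (n - i) * ((n.choose i : A) * a n)
              = (-1 : A) ^ n * ((-1 : A) ^ i * (n.choose i : A)) * a n := by
          intro i hi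
          simp only [Finset.mem_range] at hi
          have : (-1 : A) ^ (n - i) * (-1 : A) ^ i = (-1 : A) ^ n := by
            rw [← pow_add]
            congr 1
            omega
          have h3 : (-1 : A) ^ i * (-1 : A) ^ i = 1 := by
            rw [← pow_add, ← two_mul, pow_mul]
            norm_num
          linear_combination ((n.choose i : A) * a n * (-1 : A) ^ i) * this
            - ((n.choose i : A) * a n * (-1 : A) ^ (n - i)) * h3
        rw [Finset.sum_congr rfl hsign, ← Finset.sum_mul, ← Finset.mul_sum,
          alternating_aux n (by omega)]
        ring
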